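/- Fix N ≥ 3 and δ ∈ ℝ^N (an increment field with cyclic indices). Define the linear increment update at edge k by: δ(k) is replaced by 0, δ(k−1) and δ(k+1) are each increased by δ(k)/2, and all other coordinates are unchanged. Let δ' be the result of applying these updates successively for k = 1, 2, …, N−1 (one cyclic sweep avoiding the closing edge N). Then δ'(N) = δ(N) + (1/2 + 2^{−(N−1)})·δ(1) + ∑_{j=2}^{N−1} 2^{−(N−j)}·δ(j). In particular, δ'(N) ≥ δ(N) + 2^{−(N−2)}·∑_{j=1}^{N−1} δ(j) whenever δ(j) ≥ 0 for all j. -/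
import Mathlib


/-- The linear increment update at edge `k`: `δ(k)` is reset to `0` and `δ(k)/2` is added
to each of the cyclic neighbours `δ(k-1)` and `δ(k+1)`. -/
noncomputable def incUpdate {N : ℕ} (δ : ZMod N → ℝ) (k : ZMod N) : ZMod N → ℝ :=
  fun i => if i = k then 0
    else if i = k - 1 ∨ i = k + 1 then δ i + δ k / 2
    else δ i

/-- Apply the linear increment updates successively at edges `1, 2, …, j`. -/
noncomputable def sweepAux {N : ℕ} (δ : ZMod N → ℝ) : ℕ → ZMod N → ℝ
  | 0 => δ
  | j + 1 => incUpdate (sweepAux δ j) ((j + 1 : ℕ) : ZMod N)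

/-- One cyclic sweep avoiding the closing edge: updates at edges `1, …, N-1`
(vertex `N` is `0` in `ZMod N`). -/
noncomputable def sweep {N : ℕ} (δ : ZMod N → ℝ) : ZMod N → ℝ := sweepAux δ (N - 1)

lemma castNe {N : ℕ} [NeZero N] {a b : ℕ} (ha : a < N) (hb : b < N) (h : a ≠ b) :
    (a : ZMod N) ≠ (b : ZMod N) := by
  intro he
  apply h
  have := congrArg ZMod.val he
  rwa [ZMod.val_cast_of_lt ha, ZMod.val_cast_of_lt hb] at this

lemma sweepAux_key {N : ℕ} [NeZero N] (hN : 3 ≤ N) (δ : ZMod N → ℝ) :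
    ∀ j, 1 ≤ j → j ≤ N - 2 →
      (sweepAux δ j ((j + 1 : ℕ) : ZMod N) =
        ∑ m ∈ Finset.Icc 1 (j + 1), (1 / 2 : ℝ) ^ (j + 1 - m) * δ (m : ZMod N)) ∧
      sweepAux δ j 0 = δ 0 + δ 1 / 2 ∧
      (∀ i : ℕ, j + 2 ≤ i → i ≤ N - 1 → sweepAux δ j (i : ZMod N) = δ (i : ZMod N)) := by
  intro j
  induction j with
  | zero => intro h; exact absurd h (by omega)
  | succ j ih =>
    intro _ hj2
    have hs : sweepAux δ (j + 1) = incUpdate (sweepAux δ j) ((j + 1 : ℕ) : ZMod N) := rfl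
    rcases Nat.eq_zero_or_pos j with hj0 | hj0
    · subst hj0
      -- base case: j + 1 = 1
      refine ⟨?_, ?_, ?_⟩
      · rw [hs]
        simp only [incUpdate, sweepAux]
        rw [if_neg (by exact_mod_cast castNe (by omega) (by omega) (by omega) :
              ((0 + 1 + 1 : ℕ) : ZMod N) ≠ ((0 + 1 : ℕ) : ZMod N)),
          if_pos (Or.inr (by push_cast; ring))]
        rw [show Finset.Icc 1 (0 + 1 + 1) = {1, 2} from rfl]
        rw [Finset.sum_pair (by omega)]
        norm_num
        ring
      · rw [hs]
        simp only [incUpdate, sweepAux]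
        rw [if_neg (by
            have := castNe (N := N) (a := 0) (b := 0 + 1) (by omega) (by omega) (by omega)
            simpa using this),
          if_pos (Or.inl (by push_cast; ring))]
        norm_num
      · intro i hi1 hi2
        rw [hs]
        simp only [incUpdate, sweepAux]
        have e1 : ((0 + 1 : ℕ) : ZMod N) - 1 = ((0 : ℕ) : ZMod N) := by push_cast; ring
        have e2 : ((0 + 1 : ℕ) : ZMod N) + 1 = ((2 : ℕ) : ZMod N) := by push_cast; ring
        rw [if_neg (castNe (by omega) (by omega) (by omega)),
          if_neg (by
            rw [e1, e2]
            push_neg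
            exact ⟨castNe (by omega) (by omega) (by omega),
              castNe (by omega) (by omega) (by omega)⟩)]
    · obtain ⟨ha, hb, hc⟩ := ih hj0 (by omega)
      have e1 : ((j + 1 : ℕ) : ZMod N) - 1 = ((j : ℕ) : ZMod N) := by push_cast; ring
      have e2 : ((j + 1 : ℕ) : ZMod N) + 1 = ((j + 2 : ℕ) : ZMod N) := by push_cast; ring
      refine ⟨?_, ?_, ?_⟩
      · have hcond : ((j + 1 + 1 : ℕ) : ZMod N) = ((j + 1 : ℕ) : ZMod N) - 1
            ∨ ((j + 1 + 1 : ℕ) : ZMod N) = ((j + 1 : ℕ) : ZMod N) + 1 :=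
          Or.inr (by push_cast; ring)
        rw [hs]
        simp only [incUpdate]
        rw [if_neg (castNe (by omega) (by omega) (by omega)), if_pos hcond]
        rw [show ((j + 1 + 1 : ℕ) : ZMod N) = ((j + 2 : ℕ) : ZMod N) by push_cast; ring,
          hc (j + 2) (by omega) (by omega), ha]
        rw [show j + 1 + 1 = (j + 1) + 1 from rfl,
          Finset.sum_Icc_succ_top (by omega : 1 ≤ (j + 1) + 1)]
        have hcong : ∀ m ∈ Finset.Icc 1 (j + 1),
            (1 / 2 : ℝ) ^ (j + 1 + 1 - m) * δ (m : ZMod N)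
              = (1 / 2) * ((1 / 2 : ℝ) ^ (j + 1 - m) * δ (m : ZMod N)) := by
          intro m hm
          simp only [Finset.mem_Icc] at hm
          rw [show j + 1 + 1 - m = (j + 1 - m) + 1 by omega, pow_succ]
          ring
        rw [Finset.sum_congr rfl hcong, ← Finset.mul_sum]
        norm_num
        ring
      · rw [hs]
        simp only [incUpdate]
        rw [if_neg (by
            have := castNe (N := N) (a := 0) (b := j + 1) (by omega) (by omega) (by omega)
            simpa using this),
          if_neg (by
            rw [e1, e2]
            push_neg
            constructor
            · have := castNe (N := N) (a := 0) (b := j) (by omega) (by omega) (by omega)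
              simpa using this
            · have := castNe (N := N) (a := 0) (b := j + 2) (by omega) (by omega) (by omega)
              simpa using this)]
        exact hb
      · intro i hi1 hi2
        rw [hs]
        simp only [incUpdate]
        rw [if_neg (castNe (by omega) (by omega) (by omega)),
          if_neg (by
            rw [e1, e2]
            push_neg
            exact ⟨castNe (by omega) (by omega) (by omega),
              castNe (by omega) (by omega) (by omega)⟩)]
        exact hc i (by omega) hi2

/-- Increment accumulation under one cyclic sweep avoiding the closing edge:
`δ'(N) = δ(N) + (1/2 + 2^{-(N-1)})δ(1) + ∑_{j=2}^{N-1} 2^{-(N-j)} δ(j)`, and if all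
coordinates are nonnegative then `δ'(N) ≥ δ(N) + 2^{-(N-2)} ∑_{j=1}^{N-1} δ(j)`.
(The closing edge has index `N`, i.e. `0` in `ZMod N`.) -/
theorem cyclic_sweep_accumulation
    (N : ℕ) [NeZero N] (hN : 3 ≤ N) (δ : ZMod N → ℝ) :
    sweep δ 0 = δ 0 + (1 / 2 + (1 / 2 : ℝ) ^ (N - 1)) * δ 1
      + ∑ j ∈ Finset.Icc 2 (N - 1), (1 / 2 : ℝ) ^ (N - j) * δ (j : ZMod N) ∧
    ((∀ i : ZMod N, 0 ≤ δ i) →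
      sweep δ 0 ≥ δ 0 + (1 / 2 : ℝ) ^ (N - 2) * ∑ j ∈ Finset.Icc 1 (N - 1), δ (j : ZMod N)) := by
  obtain ⟨ha, hb, -⟩ := sweepAux_key hN δ (N - 2) (by omega) le_rfl
  have hswe : sweep δ = incUpdate (sweepAux δ (N - 2)) ((N - 2 + 1 : ℕ) : ZMod N) := by
    rw [sweep, show N - 1 = (N - 2) + 1 by omega]
    rfl
  have h0' : (0 : ZMod N) = ((N - 2 + 1 : ℕ) : ZMod N) + 1 := by
    have : ((N - 2 + 1 : ℕ) : ZMod N) + 1 = ((N - 2 + 1 + 1 : ℕ) : ZMod N) := by push_cast; ring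
    rw [this, show N - 2 + 1 + 1 = N by omega, ZMod.natCast_self]
  have key : sweep δ 0 = (δ 0 + δ 1 / 2)
      + (∑ m ∈ Finset.Icc 1 (N - 2 + 1), (1 / 2 : ℝ) ^ (N - 2 + 1 - m) * δ (m : ZMod N)) / 2 := by
    rw [hswe]
    simp only [incUpdate]
    rw [if_neg (by
        have := castNe (N := N) (a := 0) (b := N - 2 + 1) (by omega) (by omega) (by omega)
        simpa using this),
      if_pos (Or.inr h0'), hb, ha]
  have hsum : (∑ m ∈ Finset.Icc 1 (N - 2 + 1), (1 / 2 : ℝ) ^ (N - 2 + 1 - m) * δ (m : ZMod N)) / 2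
      = ∑ m ∈ Finset.Icc 1 (N - 1), (1 / 2 : ℝ) ^ (N - m) * δ (m : ZMod N) := by
    rw [show N - 2 + 1 = N - 1 by omega, Finset.sum_div]
    apply Finset.sum_congr rfl
    intro m hm
    simp only [Finset.mem_Icc] at hm
    rw [show N - m = (N - 1 - m) + 1 by omega, pow_succ]
    ring
  have split : Finset.Icc 1 (N - 1) = insert 1 (Finset.Icc 2 (N - 1)) := by
    ext x
    simp only [Finset.mem_Icc, Finset.mem_insert]
    omega
  have eq1 : sweep δ 0 = δ 0 + (1 / 2 + (1 / 2 : ℝ) ^ (N - 1)) * δ 1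
      + ∑ j ∈ Finset.Icc 2 (N - 1), (1 / 2 : ℝ) ^ (N - j) * δ (j : ZMod N) := by
    rw [key, hsum, split, Finset.sum_insert (by simp)]
    norm_num
    ring
  refine ⟨eq1, fun hpos => ?_⟩
  rw [eq1, ge_iff_le, split, Finset.sum_insert (by simp), mul_add]
  have h1 : (1 / 2 : ℝ) ^ (N - 2) * δ ((1 : ℕ) : ZMod N)
      ≤ (1 / 2 + (1 / 2 : ℝ) ^ (N - 1)) * δ 1 := by
    rw [Nat.cast_one]
    apply mul_le_mul_of_nonneg_right _ (hpos 1)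
    have e : (1 / 2 : ℝ) ^ (N - 2) = 2 * (1 / 2) ^ (N - 1) := by
      rw [show N - 1 = (N - 2) + 1 by omega, pow_succ]
      ring
    have h2 : (1 / 2 : ℝ) ^ (N - 1) ≤ 1 / 2 := by
      calc (1 / 2 : ℝ) ^ (N - 1) ≤ (1 / 2) ^ 1 :=
            pow_le_pow_of_le_one (by norm_num) (by norm_num) (by omega)
        _ = 1 / 2 := pow_one _
    rw [e]
    linarith
  have h2 : (1 / 2 : ℝ) ^ (N - 2) * ∑ j ∈ Finset.Icc 2 (N - 1), δ (j : ZMod N)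
      ≤ ∑ j ∈ Finset.Icc 2 (N - 1), (1 / 2 : ℝ) ^ (N - j) * δ (j : ZMod N) := by
    rw [Finset.mul_sum]
    apply Finset.sum_le_sum
    intro j hj
    simp only [Finset.mem_Icc] at hj
    exact mul_le_mul_of_nonneg_right
      (pow_le_pow_of_le_one (by norm_num) (by norm_num) (by omega)) (hpos _)
  linarith
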